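/- In a DAG, if a node R has exactly one parent X and no children (structure X → R only), then for any node Y ≠ X, R: X is d-separated from Y given the empty set if and only if X is d-separated from Y given {R}. -/

import Mathlib

/-- A directed graph (edge relation) is acyclic. -/
def IsAcyclic {α : Type*} (G : α → α → Prop) : Prop :=
  ∀ v, ¬ Relation.TransGen G v v

/-- A leaf node: no outgoing edges. -/
def IsLeaf {α : Type*} (G : α → α → Prop) (v : α) : Prop :=
  ∀ w, ¬ G v w

/-- An undirected path from `x` to `y`: a list of at least two distinct vertices,
starting at `x`, ending at `y`, consecutive vertices adjacent (in either direction). -/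
def IsUPath {α : Type*} (G : α → α → Prop) (x y : α) (p : List α) : Prop :=
  2 ≤ p.length ∧ p.head? = some x ∧ p.getLast? = some y ∧ p.Nodup ∧
    p.Chain' (fun a b => G a b ∨ G b a)

/-- The vertex at (interior) position `i` of `p` is a collider:
both adjacent path edges point into it. -/
def ColliderAt {α : Type*} (G : α → α → Prop) (p : List α) (i : ℕ) : Prop :=
  ∃ a b c, p[i-1]? = some a ∧ p[i]? = some b ∧ p[i+1]? = some c ∧ G a b ∧ G c b

/-- A path is active given conditioning set `S`: every interior collider is in `S`
or has a descendant in `S`, and every interior non-collider is not in `S`. -/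
def ActivePath {α : Type*} (G : α → α → Prop) (S : Set α) (x y : α) (p : List α) : Prop :=
  IsUPath G x y p ∧
    ∀ i, 0 < i → i + 1 < p.length →
      ∀ b, p[i]? = some b →
        (ColliderAt G p i → b ∈ S ∨ ∃ d ∈ S, Relation.ReflTransGen G b d) ∧
        (¬ ColliderAt G p i → b ∉ S)

/-- d-separation: no active undirected path between `x` and `y` given `S`. -/
def DSep {α : Type*} (G : α → α → Prop) (x y : α) (S : Set α) : Prop :=
  ∀ p : List α, ¬ ActivePath G S x y p

namespace SelfMaskAux

variable {α : Type*} {G : α → α → Prop}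

lemma no2cycle (hG : IsAcyclic G) {a b : α} (h1 : G a b) (h2 : G b a) : False :=
  hG a (Relation.TransGen.head h1 (Relation.TransGen.single h2))

lemma gidx {L : List α} {a b : ℕ} (h : a = b) {ha : a < L.length} :
    L[a] = L[b]'(h ▸ ha) := by subst h; rfl

lemma chain_get {S : α → α → Prop} {p : List α} (h : p.Chain' S) {i : ℕ}
    (hi : i + 1 < p.length) : S (p[i]'(by omega)) (p[i+1]'hi) := by
  have := List.isChain_iff_getElem.1 h i (by omega)
  simpa using this

lemma nodup_ne {p : List α} (hnd : p.Nodup) {i j : ℕ} (hi : i < p.length)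
    (hj : j < p.length) (hij : i ≠ j) : p[i] ≠ p[j] :=
  fun h => hij (hnd.getElem_inj_iff.1 h)

lemma collider_elim {p : List α} {i : ℕ} (h0 : 0 < i) (h1 : i + 1 < p.length)
    (hc : ColliderAt G p i) :
    G (p[i-1]'(by omega)) (p[i]'(by omega)) ∧ G (p[i+1]'h1) (p[i]'(by omega)) := by
  obtain ⟨a, b, c, ha, hb, hcx, hab, hcb⟩ := hc
  rw [List.getElem?_eq_getElem (show i - 1 < p.length by omega)] at ha
  rw [List.getElem?_eq_getElem (show i < p.length by omega)] at hb
  rw [List.getElem?_eq_getElem h1] at hcx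
  obtain rfl : a = p[i-1] := (Option.some_injective _ ha).symm
  obtain rfl : b = p[i]'(by omega) := (Option.some_injective _ hb).symm
  obtain rfl : c = p[i+1] := (Option.some_injective _ hcx).symm
  exact ⟨hab, hcb⟩

lemma collider_intro {p : List α} {i : ℕ} (h0 : 0 < i) (h1 : i + 1 < p.length)
    (ha : G (p[i-1]'(by omega)) (p[i]'(by omega))) (hc : G (p[i+1]'h1) (p[i]'(by omega))) :
    ColliderAt G p i :=
  ⟨p[i-1]'(by omega), p[i]'(by omega), p[i+1]'h1,
    List.getElem?_eq_getElem (by omega), List.getElem?_eq_getElem (by omega),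
    List.getElem?_eq_getElem h1, ha, hc⟩

lemma exists_simple_dipath {u v : α} (h : Relation.ReflTransGen G u v) :
    ∃ L : List α, L.head? = some u ∧ L.getLast? = some v ∧ L.Nodup ∧ L.Chain' G := by
  induction h using Relation.ReflTransGen.head_induction_on with
  | refl => exact ⟨[v], rfl, rfl, List.nodup_singleton v, List.isChain_singleton v⟩
  | @head a c hac hcv ih =>
    obtain ⟨L, hh, hl, hnd, hch⟩ := ih
    by_cases hmem : a ∈ L
    · obtain ⟨s, t, rfl⟩ := List.append_of_mem hmem
      refine ⟨a :: t, rfl, ?_, ?_, ?_⟩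
      · rw [List.getLast?_append, List.getLast?_eq_getLast (l := a :: t) (by simp)] at hl
        rw [List.getLast?_eq_getLast (l := a :: t) (by simp)]
        exact hl
      · exact (List.sublist_append_right s (a :: t)).nodup hnd
      · exact (List.isChain_append.1 hch).2.1
    · refine ⟨a :: L, rfl, ?_, List.nodup_cons.2 ⟨hmem, hnd⟩, ?_⟩
      · rw [show a :: L = [a] ++ L from rfl, List.getLast?_append, hl]
        rfl
      · refine List.isChain_cons.2 ⟨?_, hch⟩
        intro y hy
        rw [hh, Option.mem_some_iff] at hy
        exact hy ▸ hac

lemma anc_of_R {X R : α} (hparent : ∀ w, G w R ↔ w = X) {b : α}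
    (h : Relation.ReflTransGen G b R) : b = R ∨ Relation.ReflTransGen G b X := by
  rcases h.cases_tail with h | ⟨c, hbc, hcR⟩
  · exact Or.inl h.symm
  · exact Or.inr (((hparent c).1 hcR) ▸ hbc)

end SelfMaskAux

open SelfMaskAux in
/-- in a DAG, if node `R` has exactly one parent `X` and no children
(structure `X → R` only), then for any node `Y` distinct from `X` and `R`,
`X` is d-separated from `Y` given `∅` iff `X` is d-separated from `Y` given `{R}`. -/
theorem selfmask_single_cause_dsep_iff {α : Type*} (G : α → α → Prop)
    (hG : IsAcyclic G) (X R : α)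
    (hparent : ∀ w, G w R ↔ w = X) (hleaf : IsLeaf G R)
    (Y : α) (hYX : Y ≠ X) (hYR : Y ≠ R) :
    (DSep G X Y (∅ : Set α) ↔ DSep G X Y ({R} : Set α)) := by
  classical
  constructor
  · -- forward: DSep ∅ → DSep {R}
    intro h0 p hp
    obtain ⟨⟨hlen2, hhead, hlast, hnd, hch⟩, hact⟩ := hp
    rw [List.head?_eq_getElem?] at hhead
    rw [List.getLast?_eq_getElem?] at hlast
    have hplen : 0 < p.length := by omega
    have hp0 : p[0]'hplen = X := by
      rw [List.getElem?_eq_getElem hplen] at hhead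
      exact Option.some_injective _ hhead
    have hpY : p[p.length - 1]'(by omega) = Y := by
      rw [List.getElem?_eq_getElem (show p.length - 1 < p.length by omega)] at hlast
      exact Option.some_injective _ hlast
    set P : ℕ → Prop := fun i => 0 < i ∧ i + 1 < p.length ∧ ColliderAt G p i with hP
    by_cases hex : ∃ i, P i
    · -- there is a collider; build a collider-free path from X to Y
      obtain ⟨i0, hPi0⟩ := hex
      set i := Nat.findGreatest P p.length with hi
      have hPi : P i := Nat.findGreatest_spec (show i0 ≤ p.length by
        have := hPi0.2.1; omega) hPi0
      obtain ⟨hipos, hilt, hicol⟩ := hPi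
      have hmax : ∀ m, P m → m ≤ i := by
        intro m hm
        by_contra hcon
        exact Nat.findGreatest_is_greatest (P := P) (n := p.length)
          (show i < m by omega) (by have := hm.2.1; omega) hm
      have hin : i < p.length := by omega
      obtain ⟨hGa, hGc⟩ := collider_elim hipos hilt hicol
      have hbR : Relation.ReflTransGen G (p[i]'hin) R := by
        rcases (hact i hipos hilt _ (List.getElem?_eq_getElem hin)).1 hicol with h | ⟨d, hd, hrd⟩
        · rw [Set.mem_singleton_iff] at h
          exact h ▸ Relation.ReflTransGen.refl
        · rw [Set.mem_singleton_iff] at hd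
          exact hd ▸ hrd
      have hbneR : (p[i]'hin) ≠ R := by
        intro hbr
        have ha : p[i-1]'(by omega) = X := (hparent _).1 (hbr ▸ hGa)
        have hc : p[i+1]'hilt = X := (hparent _).1 (hbr ▸ hGc)
        exact nodup_ne hnd (show i - 1 < p.length by omega) hilt (by omega) (ha.trans hc.symm)
      have hbX : Relation.ReflTransGen G (p[i]'hin) X := (anc_of_R hparent hbR).resolve_left hbneR
      obtain ⟨D, hDh, hDl, hDnd, hDch⟩ := exists_simple_dipath hbX
      rw [List.head?_eq_getElem?] at hDh
      rw [List.getLast?_eq_getElem?] at hDl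
      have hDpos : 0 < D.length := by
        by_contra h
        rw [List.getElem?_eq_none (by omega)] at hDh
        cases hDh
      have hD0 : D[0]'hDpos = p[i]'hin := by
        rw [List.getElem?_eq_getElem hDpos] at hDh
        exact Option.some_injective _ hDh
      have hDlast : D[D.length - 1]'(by omega) = X := by
        rw [List.getElem?_eq_getElem (show D.length - 1 < D.length by omega)] at hDl
        exact Option.some_injective _ hDl
      set Q := p.drop i with hQdef
      have hQlen : Q.length = p.length - i := by simp [hQdef]
      have hQget : ∀ s (hs : s < Q.length), Q[s] = p[i+s]'(by omega) := by
        intro s hs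
        simp [hQdef, List.getElem_drop]
      have hQnd : Q.Nodup := (List.drop_sublist i p).nodup hnd
      have hQch : Q.Chain' (fun a b => G a b ∨ G b a) := hch.drop i
      have hQY : Q[Q.length - 1]'(by omega) = Y := by
        rw [hQget _ (by omega)]
        rw [gidx (show i + (Q.length - 1) = p.length - 1 by omega)]
        exact hpY
      set P' : ℕ → Prop := fun s => ∃ h : s < Q.length, Q[s] ∈ D with hP'
      have hP'0 : P' 0 := by
        refine ⟨by omega, ?_⟩
        rw [hQget 0 (by omega)]
        rw [gidx (show i + 0 = i by omega)]
        rw [← hD0]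
        exact List.getElem_mem _
      set j := Nat.findGreatest P' Q.length with hj
      have hP'j : P' j := Nat.findGreatest_spec (Nat.zero_le _) hP'0
      obtain ⟨hjlt, hwD⟩ := hP'j
      have hjmax : ∀ s, P' s → s ≤ j := by
        intro s hs
        by_contra hcon
        exact Nat.findGreatest_is_greatest (P := P') (n := Q.length)
          (show j < s by omega) (le_of_lt hs.1) hs
      obtain ⟨k, hk, hDk⟩ := List.mem_iff_getElem.1 hwD
      have hXnotQ : ∀ s (hs : s < Q.length), Q[s] ≠ X := by
        intro s hs h
        rw [hQget s hs] at h
        rw [← hp0] at h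
        exact nodup_ne hnd (by omega) hplen (by omega) h
      have hkm : k < D.length - 1 := by
        rcases Nat.lt_or_ge k (D.length - 1) with h | h
        · exact h
        · exfalso
          have : k = D.length - 1 := by omega
          exact hXnotQ j hjlt (hDk.symm.trans ((gidx this).trans hDlast))
      -- the new path
      set A := (D.drop k).reverse with hA
      set T := Q.drop (j+1) with hT
      have hAlen : A.length = D.length - k := by simp [hA]
      have hTlen : T.length = Q.length - (j+1) := by simp [hT]
      have hAget : ∀ t (ht : t < A.length), A[t] = D[D.length - 1 - t]'(by omega) := by
        intro t ht
        have hb1 : (D.drop k).length - 1 - t < (D.drop k).length := by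
          simp only [List.length_drop]; omega
        have h1 : (D.drop k).reverse[t]'(ht) = (D.drop k)[(D.drop k).length - 1 - t]'hb1 :=
          List.getElem_reverse _
        have h2 : (D.drop k)[(D.drop k).length - 1 - t]'hb1
            = D[k + ((D.drop k).length - 1 - t)]'(by simp only [List.length_drop]; omega) :=
          List.getElem_drop
        have h3 : D[k + ((D.drop k).length - 1 - t)]'(by simp only [List.length_drop]; omega)
            = D[D.length - 1 - t]'(by omega) := gidx (by simp only [List.length_drop]; omega)
        exact h1.trans (h2.trans h3)
      have hTget : ∀ s (hs : s < T.length), T[s] = Q[j+1+s]'(by omega) := by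
        intro s hs
        simp [hT, List.getElem_drop]
      have hAlen2 : 2 ≤ A.length := by omega
      set q := A ++ T with hq
      have hqlen : q.length = A.length + T.length := by simp [hq]
      have hq_of_A : ∀ t (ht : t < A.length), q[t]'(by omega) = A[t] := by
        intro t ht
        exact List.getElem_append_left ht
      have hq_of_T : ∀ t (ht : t < q.length) (h : A.length ≤ t),
          q[t] = T[t - A.length]'(by omega) := by
        intro t ht h
        exact List.getElem_append_right h
      -- head and last
      have hq0 : q[0]'(by omega) = X := by
        rw [hq_of_A 0 (by omega), hAget 0 (by omega), gidx (show D.length - 1 - 0 = D.length - 1 by omega)]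
        exact hDlast
      have hqY : q[q.length - 1]'(by omega) = Y := by
        rcases Nat.eq_zero_or_pos T.length with h | h
        · have hjQ : j = Q.length - 1 := by omega
          have e1 : q[q.length - 1]'(by omega) = A[q.length - 1]'(by omega) :=
            hq_of_A (q.length - 1) (by omega)
          have e2 : A[q.length - 1]'(by omega) = D[D.length - 1 - (q.length - 1)]'(by omega) :=
            hAget _ (by omega)
          have e3 : D[D.length - 1 - (q.length - 1)]'(by omega) = D[k]'hk :=
            gidx (by omega)
          have e4 : Q[j]'hjlt = Q[Q.length - 1]'(by omega) := gidx (by omega)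
          exact e1.trans (e2.trans (e3.trans (hDk.trans (e4.trans hQY))))
        · have e1 : q[q.length - 1]'(by omega) = T[q.length - 1 - A.length]'(by omega) :=
            hq_of_T (q.length - 1) (by omega) (by omega)
          have e2 : T[q.length - 1 - A.length]'(by omega)
              = Q[j + 1 + (q.length - 1 - A.length)]'(by omega) := hTget _ (by omega)
          have e3 : Q[j + 1 + (q.length - 1 - A.length)]'(by omega)
              = Q[Q.length - 1]'(by omega) := gidx (by omega)
          exact e1.trans (e2.trans (e3.trans hQY))
      -- nodup
      have hAnd : A.Nodup := List.nodup_reverse.2 ((List.drop_sublist k D).nodup hDnd)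
      have hTnd : T.Nodup := (List.drop_sublist (j+1) Q).nodup hQnd
      have hdisj : A.Disjoint T := by
        intro v hvA hvT
        have hvD : v ∈ D := List.mem_of_mem_drop (List.mem_reverse.1 hvA)
        obtain ⟨s, hs, hsv⟩ := List.mem_iff_getElem.1 hvT
        have e : Q[j + 1 + s]'(by omega) = v := (hTget s hs).symm.trans hsv
        have : P' (j + 1 + s) := ⟨by omega, by rw [e]; exact hvD⟩
        have := hjmax _ this
        omega
      have hqnd : q.Nodup := hAnd.append hTnd hdisj
      -- chain
      have hAch : A.Chain' (fun a b => G a b ∨ G b a) := by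
        rw [hA]; show List.IsChain _ _; rw [List.isChain_reverse]
        exact (hDch.drop k).imp (fun a b h => Or.inr h)
      have hTch : T.Chain' (fun a b => G a b ∨ G b a) := hQch.drop (j+1)
      have hAlast : A[A.length - 1]'(by omega) = Q[j] := by
        rw [hAget _ (by omega), gidx (show D.length - 1 - (A.length - 1) = k by omega)]
        exact hDk
      have hqch : q.Chain' (fun a b => G a b ∨ G b a) := by
        refine hAch.append hTch ?_
        intro x hx y hy
        rcases Nat.eq_zero_or_pos T.length with h | h
        · rw [List.head?_eq_getElem?, List.getElem?_eq_none (by omega)] at hy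
          exact absurd hy (by simp)
        · rw [List.getLast?_eq_getElem?, List.getElem?_eq_getElem (by omega),
            Option.mem_some_iff] at hx
          rw [List.head?_eq_getElem?, List.getElem?_eq_getElem (by omega),
            Option.mem_some_iff] at hy
          subst hx hy
          rw [hAlast, hTget 0 (by omega)]
          have := chain_get hQch (show j + 1 < Q.length by omega)
          rw [gidx (show j + 1 + 0 = j + 1 by omega)]
          exact this
      -- no colliders in q
      have hnocol : ∀ t, 0 < t → t + 1 < q.length → ¬ ColliderAt G q t := by
        intro t ht0 ht1 hcol
        obtain ⟨hga, hgc⟩ := collider_elim ht0 ht1 hcol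
        by_cases htA : t < A.length
        · -- inside A (or at junction point): edges point backwards; 2-cycle
          have e1 : q[t-1]'(by omega) = D[D.length - t]'(by omega) := by
            rw [hq_of_A (t-1) (by omega), hAget (t-1) (by omega)]
            exact gidx (by omega)
          have e2 : q[t]'(by omega) = D[D.length - 1 - t]'(by omega) := by
            rw [hq_of_A t htA, hAget t htA]
          have hchain := chain_get hDch (show (D.length - 1 - t) + 1 < D.length by omega)
          rw [gidx (show D.length - 1 - t + 1 = D.length - t by omega)] at hchain
          rw [e1, e2] at hga
          exact no2cycle hG hga hchain
        · -- inside T: transfer collider to p, contradicting maximality of i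
          push_neg at htA
          set j' := j + 1 + (t - A.length) with hj'
          have hj'Q : j' + 1 < Q.length := by omega
          have e_b : q[t]'(by omega) = Q[j']'(by omega) := by
            rw [hq_of_T t (by omega) htA, hTget _ (by omega)]
          have e_c : q[t+1]'ht1 = Q[j'+1]'(by omega) := by
            rw [hq_of_T (t+1) (by omega) (by omega), hTget _ (by omega)]
            exact gidx (by omega)
          have e_a : q[t-1]'(by omega) = Q[j'-1]'(by omega) := by
            rcases Nat.lt_or_ge (t-1) A.length with h | h
            · have : t = A.length := by omega
              rw [hq_of_A (t-1) (by omega), hAget (t-1) (by omega),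
                gidx (show D.length - 1 - (t-1) = k by omega), hDk]
              exact gidx (by omega)
            · rw [hq_of_T (t-1) (by omega) h, hTget _ (by omega)]
              exact gidx (by omega)
          have hcolp : ColliderAt G p (i + j') := by
            refine collider_intro (by omega) (show i + j' + 1 < p.length by omega) ?_ ?_
            · rw [gidx (show i + j' - 1 = i + (j' - 1) by omega), ← hQget (j'-1) (by omega),
                ← hQget j' (by omega)]
              rw [e_a, e_b] at hga
              exact hga
            · rw [gidx (show i + j' + 1 = i + (j' + 1) by omega), ← hQget (j'+1) (by omega),
                ← hQget j' (by omega)]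
              rw [e_c, e_b] at hgc
              exact hgc
          have := hmax (i + j') ⟨by omega, by omega, hcolp⟩
          omega
      -- q is active given ∅
      refine h0 q ⟨⟨by omega, ?_, ?_, hqnd, hqch⟩, ?_⟩
      · rw [List.head?_eq_getElem?, List.getElem?_eq_getElem (by omega), hq0]
      · rw [List.getLast?_eq_getElem?, List.getElem?_eq_getElem (by omega), hqY]
      · intro t ht0 ht1 b hb
        exact ⟨fun hc => absurd hc (hnocol t ht0 ht1), fun _ => Set.notMem_empty b⟩
    · -- no colliders: p itself is active given ∅
      push_neg at hex
      refine h0 p ⟨⟨hlen2, ?_, ?_, hnd, hch⟩, ?_⟩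
      · rw [List.head?_eq_getElem?]; exact hhead
      · rw [List.getLast?_eq_getElem?]; exact hlast
      · intro t ht0 ht1 b hb
        refine ⟨fun hc => absurd ⟨ht0, ht1, hc⟩ (hex t), fun _ => Set.notMem_empty b⟩
  · -- backward: DSep {R} → DSep ∅
    intro h1 p hp
    obtain ⟨⟨hlen2, hhead, hhlast, hnd, hch⟩, hact⟩ := hp
    have hnocol : ∀ i, 0 < i → i + 1 < p.length → ¬ ColliderAt G p i := by
      intro i h0 hi1 hc
      rcases (hact i h0 hi1 _ (List.getElem?_eq_getElem (show i < p.length by omega))).1 hc with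
        h | ⟨d, hd, _⟩
      · exact Set.notMem_empty _ h
      · exact Set.notMem_empty _ hd
    refine h1 p ⟨⟨hlen2, hhead, hhlast, hnd, hch⟩, ?_⟩
    intro i h0 hi1 b hb
    refine ⟨fun hc => absurd hc (hnocol i h0 hi1), fun _ hbR => ?_⟩
    rw [Set.mem_singleton_iff] at hbR
    have hin : i < p.length := by omega
    have hbi : p[i]'hin = R := by
      rw [List.getElem?_eq_getElem hin] at hb
      exact (Option.some_injective _ hb).trans hbR
    have hc1 := chain_get hch (show (i-1) + 1 < p.length by omega)
    rw [gidx (show i - 1 + 1 = i by omega)] at hc1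
    have hc2 := chain_get hch (show i + 1 < p.length by omega)
    rw [hbi] at hc1 hc2
    have ha : p[i-1]'(by omega) = X := by
      rcases hc1 with h | h
      · exact (hparent _).1 h
      · exact absurd h (hleaf _)
    have hc : p[i+1]'hi1 = X := by
      rcases hc2 with h | h
      · exact absurd h (hleaf _)
      · exact (hparent _).1 h
    exact nodup_ne hnd (show i - 1 < p.length by omega) hi1 (by omega) (ha.trans hc.symm)
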